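/- arXiv:1710.06766 — 2 statements merged into one kernel-verified Lean document; each statement's English description precedes it below -/
import Mathlib

section
/- (Massey's bound) For any integer-valued random variable U with finite variance, H(U) ≤ (1/2) log(2πe(Var[U] + 1/12)), where H is the Shannon entropy in nats. -/
open MeasureTheory Real

/-- Massey's bound: for any integer-valued random variable `U` (pmf `f`) with finite
variance, `H(U) ≤ ½ log(2πe (Var[U] + 1/12))`, entropy in nats. -/
theorem massey_entropy_bound (f : ℤ → ℝ) (hf : ∀ u, 0 ≤ f u) (hsum : ∑' u : ℤ, f u = 1)
    (hmean : Summable (fun u : ℤ => f u * (u : ℝ)))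
    (hvar : Summable (fun u : ℤ => f u * ((u : ℝ) - ∑' v : ℤ, f v * (v : ℝ)) ^ 2)) :
    (-∑' u : ℤ, f u * Real.log (f u)) ≤
      (1 / 2) * Real.log (2 * Real.pi * Real.exp 1 *
        ((∑' u : ℤ, f u * ((u : ℝ) - ∑' v : ℤ, f v * (v : ℝ)) ^ 2) + 1 / 12)) := by
  set μ := ∑' v : ℤ, f v * (v : ℝ) with hμdef
  set V := ∑' u : ℤ, f u * ((u : ℝ) - μ) ^ 2 with hVdef
  have hV0 : 0 ≤ V := tsum_nonneg fun u => mul_nonneg (hf u) (sq_nonneg _)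
  set s := V + 1 / 12 with hsdef
  have hs0 : (0 : ℝ) < s := by rw [hsdef]; linarith
  have h2pis : (0 : ℝ) < 2 * π * s := by positivity
  have Sf : Summable f := by
    by_contra h
    rw [tsum_eq_zero_of_not_summable h] at hsum
    norm_num at hsum
  by_cases hSlog : Summable (fun u : ℤ => f u * Real.log (f u))
  swap
  · rw [tsum_eq_zero_of_not_summable hSlog, neg_zero]
    apply mul_nonneg (by norm_num)
    apply Real.log_nonneg
    have hπ : (3 : ℝ) ≤ π := Real.pi_gt_three.le
    have he : (2.7 : ℝ) ≤ Real.exp 1 := by linarith [Real.exp_one_gt_d9]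
    have h12 : (1 / 12 : ℝ) ≤ s := by rw [hsdef]; linarith
    calc (1 : ℝ) ≤ 2 * 3 * 2.7 * (1 / 12) := by norm_num
      _ ≤ 2 * π * Real.exp 1 * s := by gcongr <;> norm_num
  -- main case
  set sq2 : ℝ := Real.sqrt (2 * π * s) with hsq2def
  have hsq2 : 0 < sq2 := Real.sqrt_pos.2 h2pis
  set φ : ℝ → ℝ := fun x => sq2⁻¹ * Real.exp (-(2 * s)⁻¹ * (x - μ) ^ 2) with hφdef
  have hφcont : Continuous φ := by
    rw [hφdef]; fun_prop
  have hφexp : ∀ x : ℝ, φ x = Real.exp (-Real.log sq2 - (2 * s)⁻¹ * (x - μ) ^ 2) := by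
    intro x
    rw [show -Real.log sq2 - (2 * s)⁻¹ * (x - μ) ^ 2
        = -Real.log sq2 + -(2 * s)⁻¹ * (x - μ) ^ 2 by ring,
      Real.exp_add, Real.exp_neg, Real.exp_log hsq2, hφdef]
  have hφ0 : ∀ x : ℝ, 0 ≤ φ x := fun x => (hφexp x).symm ▸ (Real.exp_pos _).le
  set L : ℤ → ℝ := fun u => -Real.log sq2 - (2 * s)⁻¹ * (((u : ℝ) - μ) ^ 2 + 1 / 12)
    with hLdef
  set g : ℤ → ℝ := fun u => ∫ x in ((u : ℝ) - 1 / 2)..((u : ℝ) + 1 / 2), φ x with hgdef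
  -- the quadratic integral
  have Ik : ∀ u : ℤ, (∫ x in ((u : ℝ) - 1 / 2)..((u : ℝ) + 1 / 2), (x - μ) ^ 2)
      = ((u : ℝ) - μ) ^ 2 + 1 / 12 := by
    intro u
    rw [intervalIntegral.integral_comp_sub_right (fun x => x ^ 2) μ, integral_pow]
    ring
  -- the auxiliary polynomial integral
  have hP : ∀ u : ℤ, (∫ x in ((u : ℝ) - 1 / 2)..((u : ℝ) + 1 / 2),
      Real.exp (L u) * ((-Real.log sq2 - (2 * s)⁻¹ * (x - μ) ^ 2) - L u + 1))
      = Real.exp (L u) := by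
    intro u
    have e : (fun x : ℝ => Real.exp (L u) * ((-Real.log sq2 - (2 * s)⁻¹ * (x - μ) ^ 2)
          - L u + 1))
        = fun x => (Real.exp (L u) * (-Real.log sq2 - L u + 1))
          + (-(Real.exp (L u)) * (2 * s)⁻¹) * (x - μ) ^ 2 :=
      funext fun x => by ring
    rw [e, intervalIntegral.integral_add (intervalIntegrable_const)
        ((Continuous.intervalIntegrable (by fun_prop) _ _)),
      intervalIntegral.integral_const, intervalIntegral.integral_const_mul, Ik u]
    simp only [hLdef, smul_eq_mul]
    ring
  -- Jensen-type bound: exp (L u) ≤ g u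
  have hgL : ∀ u : ℤ, Real.exp (L u) ≤ g u := by
    intro u
    rw [hgdef]
    rw [← hP u]
    apply intervalIntegral.integral_mono_on (by linarith : ((u : ℝ) - 1 / 2) ≤ (u : ℝ) + 1 / 2)
      ((Continuous.intervalIntegrable (by fun_prop) _ _))
      (hφcont.intervalIntegrable _ _)
    intro x _
    rw [hφexp x]
    have h1 := Real.add_one_le_exp ((-Real.log sq2 - (2 * s)⁻¹ * (x - μ) ^ 2) - L u)
    calc Real.exp (L u) * ((-Real.log sq2 - (2 * s)⁻¹ * (x - μ) ^ 2) - L u + 1)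
        ≤ Real.exp (L u) * Real.exp ((-Real.log sq2 - (2 * s)⁻¹ * (x - μ) ^ 2) - L u) :=
          mul_le_mul_of_nonneg_left h1 (Real.exp_nonneg _)
      _ = Real.exp (-Real.log sq2 - (2 * s)⁻¹ * (x - μ) ^ 2) := by
          rw [← Real.exp_add]; ring_nf
  have hg0 : ∀ u : ℤ, 0 < g u := fun u => lt_of_lt_of_le (Real.exp_pos _) (hgL u)
  -- integrability and total mass of φ
  have hφint : Integrable φ := by
    have h1 : Integrable (fun x : ℝ => Real.exp (-(2 * s)⁻¹ * x ^ 2)) :=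
      integrable_exp_neg_mul_sq (by positivity)
    rw [hφdef]
    exact (h1.comp_sub_right μ).const_mul _
  have hφ1 : ∫ x, φ x = 1 := by
    rw [hφdef, integral_const_mul,
      integral_sub_right_eq_self (μ := volume) (fun x => Real.exp (-(2 * s)⁻¹ * x ^ 2)) μ,
      integral_gaussian]
    rw [show π / (2 * s)⁻¹ = 2 * π * s by field_simp]
    exact inv_mul_cancel₀ hsq2.ne'
  -- sums of g over finite sets are at most 1
  have hgsum_le : ∀ F : Finset ℤ, ∑ u ∈ F, g u ≤ 1 := by
    intro F
    have hdisj : (↑F : Set ℤ).Pairwise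
        (Function.onFun Disjoint (fun u : ℤ => Set.Ioc ((u : ℝ) - 1 / 2) ((u : ℝ) + 1 / 2))) := by
      intro a _ b _ hab
      simp only [Function.onFun]
      rw [Set.Ioc_disjoint_Ioc]
      rcases lt_or_gt_of_ne hab with h | h
      · have h1 : (a : ℝ) + 1 ≤ b := by exact_mod_cast Int.add_one_le_iff.mpr h
        exact le_trans (min_le_left _ _) (le_trans (by linarith) (le_max_right _ _))
      · have h1 : (b : ℝ) + 1 ≤ a := by exact_mod_cast Int.add_one_le_iff.mpr h
        exact le_trans (min_le_right _ _) (le_trans (by linarith) (le_max_left _ _))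
    have hFeq : ∑ u ∈ F, g u
        = ∫ x in ⋃ u ∈ F, Set.Ioc ((u : ℝ) - 1 / 2) ((u : ℝ) + 1 / 2), φ x := by
      rw [integral_biUnion_finset F (fun i _ => measurableSet_Ioc) hdisj
        (fun i _ => hφint.integrableOn)]
      exact Finset.sum_congr rfl fun u _ => intervalIntegral.integral_of_le (by linarith)
    rw [hFeq, ← hφ1]
    exact setIntegral_le_integral hφint (Filter.Eventually.of_forall hφ0)
  have Sg : Summable g := summable_of_sum_le (fun u => (hg0 u).le) hgsum_le
  have htg : ∑' u, g u ≤ 1 := Summable.tsum_le_of_sum_le Sg hgsum_le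
  -- the key pointwise inequality
  have key : ∀ u : ℤ, f u - g u ≤ f u * Real.log (f u) - f u * L u := by
    intro u
    rcases (hf u).eq_or_lt with h0 | h0
    · rw [← h0]
      simp only [zero_mul, sub_zero, zero_sub]
      linarith [hg0 u]
    · have hgl : L u ≤ Real.log (g u) := by
        have h2 := Real.log_le_log (Real.exp_pos (L u)) (hgL u)
        rwa [Real.log_exp] at h2
      have hd : 0 < g u / f u := div_pos (hg0 u) h0
      have hlog := Real.log_le_sub_one_of_pos hd
      rw [Real.log_div (hg0 u).ne' h0.ne'] at hlog
      have h1 : f u * (Real.log (g u) - Real.log (f u)) ≤ f u * (g u / f u - 1) :=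
        mul_le_mul_of_nonneg_left hlog h0.le
      have h2 : f u * (g u / f u - 1) = g u - f u := by field_simp
      rw [h2, mul_sub] at h1
      have h3 : f u * L u ≤ f u * Real.log (g u) := mul_le_mul_of_nonneg_left hgl h0.le
      linarith
  -- summability of f * L and its sum
  have hLdecomp : ∀ u : ℤ, f u * L u
      = (-Real.log sq2 - (2 * s)⁻¹ * (1 / 12)) * f u
        + (-(2 * s)⁻¹) * (f u * ((u : ℝ) - μ) ^ 2) := by
    intro u; simp only [hLdef]; ring
  have SfL : Summable (fun u : ℤ => f u * L u) := by
    rw [funext hLdecomp]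
    exact ((Sf.mul_left _).add (hvar.mul_left _))
  have htfL : ∑' u : ℤ, f u * L u
      = (-Real.log sq2 - (2 * s)⁻¹ * (1 / 12)) + (-(2 * s)⁻¹) * V := by
    calc ∑' u : ℤ, f u * L u
        = ∑' u : ℤ, ((-Real.log sq2 - (2 * s)⁻¹ * (1 / 12)) * f u
          + (-(2 * s)⁻¹) * (f u * ((u : ℝ) - μ) ^ 2)) := tsum_congr hLdecomp
      _ = (-Real.log sq2 - (2 * s)⁻¹ * (1 / 12)) * (∑' u : ℤ, f u)
          + (-(2 * s)⁻¹) * ∑' u : ℤ, f u * ((u : ℝ) - μ) ^ 2 := by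
          rw [Summable.tsum_add (Sf.mul_left _) (hvar.mul_left _), tsum_mul_left, tsum_mul_left]
      _ = _ := by rw [hsum, ← hVdef]; ring
  -- assemble
  have hmono : ∑' u : ℤ, (f u - g u) ≤ ∑' u : ℤ, (f u * Real.log (f u) - f u * L u) :=
    Summable.tsum_le_tsum key (Sf.sub Sg) (hSlog.sub SfL)
  have h1 : (0 : ℝ) ≤ ∑' u : ℤ, (f u - g u) := by
    rw [Summable.tsum_sub Sf Sg, hsum]; linarith
  have h2 : ∑' u : ℤ, (f u * Real.log (f u) - f u * L u)
      = (∑' u : ℤ, f u * Real.log (f u)) - ∑' u : ℤ, f u * L u := Summable.tsum_sub hSlog SfL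
  have hmain : ∑' u : ℤ, f u * L u ≤ ∑' u : ℤ, f u * Real.log (f u) := by linarith
  have e1 : ∑' u : ℤ, f u * L u = -Real.log sq2 - 1 / 2 := by
    rw [htfL, hsdef]; field_simp; ring
  have hfinal : (1 / 2 : ℝ) * Real.log (2 * π * Real.exp 1 * s) = Real.log sq2 + 1 / 2 := by
    rw [hsq2def, Real.log_sqrt h2pis.le,
      show 2 * π * Real.exp 1 * s = (2 * π * s) * Real.exp 1 by ring,
      Real.log_mul h2pis.ne' (Real.exp_ne_zero 1), Real.log_exp]
    ring
  rw [show 2 * π * Real.exp 1 * (V + 1 / 12) = 2 * π * Real.exp 1 * s by rw [hsdef]]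
  rw [hfinal]
  linarith [hmain, e1 ▸ hmain]
end

section
/- If the entries of the test matrix X are i.i.d. Bernoulli(q) and Y depends on (β, X) only through the counts N_1,...,N_d, then I(β; Y | β_{S_ℓ^c}, X) ≤ I(X_{0,ℓ}; Y | X_{1,ℓ}), where X_{0,ℓ} is the subvector of X indexed by the hidden items S_ℓ and X_{1,ℓ} the subvector indexed by revealed items, grouped by label. -/
open Finset
open scoped Classical

/-- Log-sum inequality. -/
lemma log_sum_ineq {ι : Type*} (s : Finset ι) (P Q : ι → ℝ)
    (hq0 : ∀ i ∈ s, 0 ≤ Q i) (hle : ∀ i ∈ s, Q i ≤ P i) :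
    ∑ i ∈ s, Q i * Real.log (P i / Q i)
      ≤ (∑ i ∈ s, Q i) * Real.log ((∑ i ∈ s, P i) / (∑ i ∈ s, Q i)) := by
  set Qs := ∑ i ∈ s, Q i with hQs
  set Ps := ∑ i ∈ s, P i with hPs
  have hQs0 : 0 ≤ Qs := Finset.sum_nonneg hq0
  have hPQ : Qs ≤ Ps := Finset.sum_le_sum hle
  rcases eq_or_lt_of_le hQs0 with h0 | hQpos
  · -- Qs = 0 → all Q i = 0
    have hz : ∀ i ∈ s, Q i = 0 := by
      intro i hi
      have := (Finset.sum_eq_zero_iff_of_nonneg hq0).1 h0.symm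
      exact this i hi
    rw [← h0]
    have : ∑ i ∈ s, Q i * Real.log (P i / Q i) = 0 := by
      apply Finset.sum_eq_zero
      intro i hi; rw [hz i hi]; ring
    rw [this]; ring_nf; simp
  · have hPpos : 0 < Ps := lt_of_lt_of_le hQpos hPQ
    -- termwise bound: Q i * log (P i / Q i) ≤ P i * Qs / Ps - Q i + Q i * Real.log (Ps / Qs)
    have key : ∀ i ∈ s, Q i * Real.log (P i / Q i)
        ≤ P i * Qs / Ps - Q i + Q i * Real.log (Ps / Qs) := by
      intro i hi
      rcases eq_or_lt_of_le (hq0 i hi) with h0 | hqi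
      · rw [← h0]
        simp only [zero_mul, mul_zero]
        have hP0 : 0 ≤ P i := le_trans h0.le (hle i hi)
        have : 0 ≤ P i * Qs / Ps := by positivity
        linarith
      · have hpi : 0 < P i := lt_of_lt_of_le hqi (hle i hi)
        have hratio : 0 < P i * Qs / (Q i * Ps) := by positivity
        have hlog := Real.log_le_sub_one_of_pos hratio
        have hsplit : Real.log (P i / Q i)
            = Real.log (P i * Qs / (Q i * Ps)) + Real.log (Ps / Qs) := by
          rw [← Real.log_mul (ne_of_gt hratio) (ne_of_gt (by positivity))]
          congr 1
          field_simp
        rw [hsplit, mul_add]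
        have : Q i * Real.log (P i * Qs / (Q i * Ps)) ≤ Q i * (P i * Qs / (Q i * Ps) - 1) :=
          mul_le_mul_of_nonneg_left hlog hqi.le
        have heq : Q i * (P i * Qs / (Q i * Ps) - 1) = P i * Qs / Ps - Q i := by
          field_simp
        linarith [heq ▸ this]
    calc ∑ i ∈ s, Q i * Real.log (P i / Q i)
        ≤ ∑ i ∈ s, (P i * Qs / Ps - Q i + Q i * Real.log (Ps / Qs)) :=
          Finset.sum_le_sum key
      _ = Qs * Real.log (Ps / Qs) := by
          rw [Finset.sum_add_distrib, Finset.sum_sub_distrib, ← Finset.sum_mul,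
            ← Finset.sum_div, ← Finset.sum_mul]
          rw [← hPs, ← hQs]
          field_simp
          ring

noncomputable def cmi {α β γ : Type*} [Fintype α] [Fintype β] [Fintype γ]
    (p : α → β → γ → ℝ) : ℝ :=
  ∑ a, ∑ b, ∑ c, p a b c *
    Real.log (p a b c * (∑ a', ∑ c', p a' b c') / ((∑ c', p a b c') * (∑ a', p a' b c)))

/-- Decomposition of `cmi` for a kernel-structured pmf. -/
lemma cmi_kernel_eq {α β 𝒴 𝒩 : Type*} [Fintype α] [Fintype β] [Fintype 𝒴]
    (μ : α → β → ℝ) (g : α → β → 𝒩) (W : 𝒩 → 𝒴 → ℝ)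
    (hW0 : ∀ N y, 0 ≤ W N y) (hW1 : ∀ N, ∑ y, W N y = 1)
    (hμ0 : ∀ a b, 0 ≤ μ a b) :
    cmi (fun a b y => μ a b * W (g a b) y)
      = (∑ a, ∑ b, μ a b * ∑ y, W (g a b) y * Real.log (W (g a b) y))
        + ∑ b, ∑ y, (∑ a, μ a b * W (g a b) y) *
            Real.log ((∑ a, μ a b) / (∑ a, μ a b * W (g a b) y)) := by
  have hm : ∀ b, (∑ a', ∑ y', μ a' b * W (g a' b) y') = ∑ a', μ a' b := by
    intro b
    refine Finset.sum_congr rfl fun a _ => ?_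
    rw [← Finset.mul_sum, hW1, mul_one]
  have hsumy : ∀ a b, (∑ y', μ a b * W (g a b) y') = μ a b := by
    intro a b; rw [← Finset.mul_sum, hW1, mul_one]
  unfold cmi
  have key : ∀ a b y,
      μ a b * W (g a b) y *
        Real.log (μ a b * W (g a b) y * (∑ a', μ a' b) /
          (μ a b * (∑ a', μ a' b * W (g a' b) y)))
      = μ a b * (W (g a b) y * Real.log (W (g a b) y))
        + μ a b * W (g a b) y *
            Real.log ((∑ a', μ a' b) / (∑ a', μ a' b * W (g a' b) y)) := by
    intro a b y
    rcases eq_or_lt_of_le (hμ0 a b) with h0 | hμ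
    · rw [← h0]; ring
    rcases eq_or_lt_of_le (hW0 (g a b) y) with h0 | hW
    · rw [← h0]; ring
    have hqpos : 0 < ∑ a', μ a' b * W (g a' b) y := by
      apply Finset.sum_pos' (fun a' _ => mul_nonneg (hμ0 a' b) (hW0 _ y))
      exact ⟨a, Finset.mem_univ a, by positivity⟩
    have hmpos : 0 < ∑ a', μ a' b :=
      Finset.sum_pos' (fun a' _ => hμ0 a' b) ⟨a, Finset.mem_univ a, hμ⟩
    have harg : μ a b * W (g a b) y * (∑ a', μ a' b) /
          (μ a b * (∑ a', μ a' b * W (g a' b) y))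
        = W (g a b) y * ((∑ a', μ a' b) / (∑ a', μ a' b * W (g a' b) y)) := by
      field_simp
    rw [harg, Real.log_mul (ne_of_gt hW) (ne_of_gt (by positivity))]
    ring
  calc ∑ a, ∑ b, ∑ y, (μ a b * W (g a b) y) *
        Real.log ((μ a b * W (g a b) y) * (∑ a', ∑ y', μ a' b * W (g a' b) y') /
          ((∑ y', μ a b * W (g a b) y') * (∑ a', μ a' b * W (g a' b) y)))
      = ∑ a, ∑ b, ∑ y, (μ a b * (W (g a b) y * Real.log (W (g a b) y))
          + μ a b * W (g a b) y *
              Real.log ((∑ a', μ a' b) / (∑ a', μ a' b * W (g a' b) y))) := by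
        refine Finset.sum_congr rfl fun a _ => Finset.sum_congr rfl fun b _ =>
          Finset.sum_congr rfl fun y _ => ?_
        rw [hm b, hsumy a b]
        exact key a b y
    _ = (∑ a, ∑ b, μ a b * ∑ y, W (g a b) y * Real.log (W (g a b) y))
        + ∑ b, ∑ y, (∑ a, μ a b * W (g a b) y) *
            Real.log ((∑ a, μ a b) / (∑ a, μ a b * W (g a b) y)) := by
        simp only [Finset.sum_add_distrib]
        congr 1
        · refine Finset.sum_congr rfl fun a _ => Finset.sum_congr rfl fun b _ => ?_
          rw [Finset.mul_sum]
        · rw [Finset.sum_comm]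
          refine Finset.sum_congr rfl fun b _ => ?_
          rw [Finset.sum_comm]
          refine Finset.sum_congr rfl fun y _ => ?_
          rw [Finset.sum_mul]

/-- Main general lemma: data-processing / conditioning bound for `cmi` of
kernel-structured pmfs related by a pushforward. -/
lemma cmi_le_of_push {α β α' β' 𝒩 𝒴 : Type*} [Fintype α] [Fintype β] [Fintype α']
    [Fintype β'] [Fintype 𝒴]
    (μ : α → β → ℝ) (μ' : α' → β' → ℝ) (g : α → β → 𝒩) (g' : α' → β' → 𝒩)
    (W : 𝒩 → 𝒴 → ℝ) (hW0 : ∀ N y, 0 ≤ W N y) (hW1 : ∀ N, ∑ y, W N y = 1)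
    (hμ0 : ∀ a b, 0 ≤ μ a b)
    (ψ : α → β → α') (f : β → β')
    (hpush : ∀ a' b', μ' a' b'
      = ∑ a, ∑ b, if ψ a b = a' ∧ f b = b' then μ a b else 0)
    (hg : ∀ a b, μ a b ≠ 0 → g' (ψ a b) (f b) = g a b) :
    cmi (fun a b y => μ a b * W (g a b) y)
      ≤ cmi (fun a' b' y => μ' a' b' * W (g' a' b') y) := by
  have hμ0' : ∀ a' b', 0 ≤ μ' a' b' := by
    intro a' b'
    rw [hpush]
    exact Finset.sum_nonneg fun a _ => Finset.sum_nonneg fun b _ => by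
      split <;> simp [hμ0]
  rw [cmi_kernel_eq μ g W hW0 hW1 hμ0, cmi_kernel_eq μ' g' W hW0 hW1 hμ0']
  -- pushforward of any function of (μ, g)
  have hpushgen : ∀ (F : ℝ → 𝒩 → ℝ), (∀ N, F 0 N = 0) →
      ∀ b', (∑ b ∈ Finset.univ.filter (fun b => f b = b'), ∑ a, F (μ a b) (g a b))
        = ∑ a', ∑ a, ∑ b, if ψ a b = a' ∧ f b = b' then F (μ a b) (g a b) else 0 := by
    intro F hF0 b'
    rw [Finset.sum_comm]
    rw [Finset.sum_comm (s := (Finset.univ : Finset α'))]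
    refine Finset.sum_congr rfl fun a _ => ?_
    rw [Finset.sum_comm]
    rw [Finset.sum_filter]
    refine Finset.sum_congr rfl fun b _ => ?_
    by_cases hfb : f b = b'
    · simp only [hfb, if_true, and_true]
      rw [Finset.sum_ite_eq (Finset.univ : Finset α') (ψ a b)]
      simp
    · simp [hfb]
  -- first components are equal
  have h1 : (∑ a', ∑ b', μ' a' b' * ∑ y, W (g' a' b') y * Real.log (W (g' a' b') y))
      = ∑ a, ∑ b, μ a b * ∑ y, W (g a b) y * Real.log (W (g a b) y) := by
    calc ∑ a', ∑ b', μ' a' b' * ∑ y, W (g' a' b') y * Real.log (W (g' a' b') y)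
        = ∑ a', ∑ b', ∑ a, ∑ b, if ψ a b = a' ∧ f b = b' then
            μ a b * ∑ y, W (g a b) y * Real.log (W (g a b) y) else 0 := by
          refine Finset.sum_congr rfl fun a' _ => Finset.sum_congr rfl fun b' _ => ?_
          rw [hpush, Finset.sum_mul]
          refine Finset.sum_congr rfl fun a _ => ?_
          rw [Finset.sum_mul]
          refine Finset.sum_congr rfl fun b _ => ?_
          split
          · rcases (by assumption : ψ a b = a' ∧ f b = b') with ⟨h1, h2⟩
            by_cases hμz : μ a b = 0
            · simp [hμz]
            · rw [← h1, ← h2, hg a b hμz]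
          · simp
      _ = ∑ b', ∑ b ∈ Finset.univ.filter (fun b => f b = b'), ∑ a,
            μ a b * ∑ y, W (g a b) y * Real.log (W (g a b) y) := by
          rw [Finset.sum_comm]
          refine Finset.sum_congr rfl fun b' _ => ?_
          exact (hpushgen (fun m N => m * ∑ y, W N y * Real.log (W N y))
            (fun N => zero_mul _) b').symm
      _ = ∑ a, ∑ b, μ a b * ∑ y, W (g a b) y * Real.log (W (g a b) y) := by
          rw [Finset.sum_comm (s := (Finset.univ : Finset α))]
          exact Finset.sum_fiberwise Finset.univ f _
  rw [h1]
  gcongr ?_ + ?_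
  · exact le_refl _
  -- second components: log-sum inequality over fibers of f
  have hWle1 : ∀ N y, W N y ≤ 1 := by
    intro N y
    calc W N y ≤ ∑ y', W N y' := Finset.single_le_sum (fun y' _ => hW0 N y') (Finset.mem_univ y)
      _ = 1 := hW1 N
  set Q : β → 𝒴 → ℝ := fun b y => ∑ a, μ a b * W (g a b) y with hQdef
  set M : β → ℝ := fun b => ∑ a, μ a b with hMdef
  have hQ' : ∀ b' y, (∑ a', μ' a' b' * W (g' a' b') y)
      = ∑ b ∈ Finset.univ.filter (fun b => f b = b'), Q b y := by
    intro b' y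
    have : (∑ a', μ' a' b' * W (g' a' b') y)
        = ∑ a', ∑ a, ∑ b, if ψ a b = a' ∧ f b = b'
            then μ a b * W (g a b) y else 0 := by
      refine Finset.sum_congr rfl fun a' _ => ?_
      rw [hpush, Finset.sum_mul]
      refine Finset.sum_congr rfl fun a _ => ?_
      rw [Finset.sum_mul]
      refine Finset.sum_congr rfl fun b _ => ?_
      split
      · rcases (by assumption : ψ a b = a' ∧ f b = b') with ⟨h1', h2'⟩
        by_cases hμz : μ a b = 0
        · simp [hμz]
        · rw [← h1', ← h2', hg a b hμz]
      · simp
    rw [this, ← hpushgen (fun m N => m * W N y) (fun N => zero_mul _) b']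
  have hM' : ∀ b', (∑ a', μ' a' b')
      = ∑ b ∈ Finset.univ.filter (fun b => f b = b'), M b := by
    intro b'
    have : (∑ a', μ' a' b')
        = ∑ a', ∑ a, ∑ b, if ψ a b = a' ∧ f b = b' then μ a b else 0 := by
      refine Finset.sum_congr rfl fun a' _ => hpush a' b'
    rw [this, ← hpushgen (fun m N => m) (fun N => rfl) b']
  calc ∑ b, ∑ y, Q b y * Real.log (M b / Q b y)
      = ∑ b', ∑ b ∈ Finset.univ.filter (fun b => f b = b'),
          ∑ y, Q b y * Real.log (M b / Q b y) :=
        (Finset.sum_fiberwise Finset.univ f _).symm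
    _ ≤ ∑ b', ∑ y, (∑ a', μ' a' b' * W (g' a' b') y) *
          Real.log ((∑ a', μ' a' b') / (∑ a', μ' a' b' * W (g' a' b') y)) := by
        refine Finset.sum_le_sum fun b' _ => ?_
        rw [Finset.sum_comm]
        refine Finset.sum_le_sum fun y _ => ?_
        rw [hQ' b' y, hM' b']
        refine log_sum_ineq _ M (fun b => Q b y) ?_ ?_
        · intro b _
          exact Finset.sum_nonneg fun a _ => mul_nonneg (hμ0 a b) (hW0 _ y)
        · intro b _
          refine Finset.sum_le_sum fun a _ => ?_
          calc μ a b * W (g a b) y ≤ μ a b * 1 :=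
              mul_le_mul_of_nonneg_left (hWle1 _ y) (hμ0 a b)
            _ = μ a b := mul_one _

/-- Group the values of `x` on a finset `s` of size `n` into a vector `Fin n → Bool`. -/
noncomputable def grp {ι : Type*} [LinearOrder ι] (s : Finset ι) (x : ι → Bool) (n : ℕ) :
    Fin n → Bool :=
  if h : s.card = n then fun i => x (s.orderEmbOfFin h i) else fun _ => false

lemma grp_apply {ι : Type*} [LinearOrder ι] (s : Finset ι) (x : ι → Bool) {n : ℕ}
    (h : s.card = n) (i : Fin n) : grp s x n i = x (s.orderEmbOfFin h i) := by
  rw [grp, dif_pos h]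

lemma grp_card {ι : Type*} [LinearOrder ι] (s : Finset ι) (x : ι → Bool) {n : ℕ}
    (h : s.card = n) :
    (Finset.univ.filter fun i => grp s x n i = true).card
      = (s.filter fun j => x j = true).card := by
  apply Finset.card_bij (fun i _ => s.orderEmbOfFin h i)
  · intro i hi
    rw [Finset.mem_filter] at hi ⊢
    refine ⟨s.orderEmbOfFin_mem h i, ?_⟩
    rw [← grp_apply s x h i]
    exact hi.2
  · intro i _ i' _ hii'
    exact (s.orderEmbOfFin h).injective hii'
  · intro j hj
    rw [Finset.mem_filter] at hj
    have : j ∈ Set.range (s.orderEmbOfFin h) := by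
      rw [Finset.range_orderEmbOfFin]; exact hj.1
    obtain ⟨i, hi⟩ := this
    refine ⟨i, Finset.mem_filter.2 ⟨Finset.mem_univ i, ?_⟩, hi⟩
    rw [grp_apply s x h i, hi]
    exact hj.2

lemma prod_grp {ι : Type*} [LinearOrder ι] (s : Finset ι) (x : ι → Bool) {n : ℕ}
    (h : s.card = n) (w : Bool → ℝ) :
    ∏ j ∈ s, w (x j) = ∏ i, w (grp s x n i) := by
  symm
  apply Finset.prod_bij (fun (i : Fin n) _ => s.orderEmbOfFin h i)
  · intro i _; exact s.orderEmbOfFin_mem h i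
  · intro i _ i' _ hii'; exact (s.orderEmbOfFin h).injective hii'
  · intro j hj
    have : j ∈ Set.range (s.orderEmbOfFin h) := by
      rw [Finset.range_orderEmbOfFin]; exact hj
    obtain ⟨i, hi⟩ := this
    exact ⟨i, Finset.mem_univ i, hi⟩
  · intro i _; rw [grp_apply s x h i]

/-- Summing a product weight over boolean assignments with prescribed groups. -/
lemma sum_partition_prod {ι κ : Type*} [Fintype ι] [LinearOrder ι] [Fintype κ]
    (S : κ → Finset ι) (hdisj : ∀ k k', k ≠ k' → Disjoint (S k) (S k'))
    (hcover : ∀ j, ∃ k, j ∈ S k)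
    (n : κ → ℕ) (hcard : ∀ k, (S k).card = n k)
    (w : Bool → ℝ) (v : ∀ k, Fin (n k) → Bool) :
    ∑ x : ι → Bool, (if ∀ k, grp (S k) x (n k) = v k then ∏ j, w (x j) else 0)
      = ∏ k, ∏ i, w (v k i) := by
  have huniv : Finset.univ.biUnion S = Finset.univ := by
    apply Finset.eq_univ_of_forall
    intro j
    obtain ⟨k, hk⟩ := hcover j
    exact Finset.mem_biUnion.2 ⟨k, Finset.mem_univ k, hk⟩
  have hprod : ∀ x : ι → Bool, ∏ j, w (x j) = ∏ k, ∏ i, w (grp (S k) x (n k) i) := by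
    intro x
    rw [← huniv, Finset.prod_biUnion (fun k _ k' _ hkk' => hdisj k k' hkk')]
    exact Finset.prod_congr rfl fun k _ => prod_grp (S k) x (hcard k) w
  set Ψ : (ι → Bool) → (∀ k, Fin (n k) → Bool) := fun x k => grp (S k) x (n k) with hΨ
  have hbij : Function.Bijective Ψ := by
    rw [Fintype.bijective_iff_injective_and_card]
    constructor
    · intro x x' hxx'
      funext j
      obtain ⟨k, hk⟩ := hcover j
      have : j ∈ Set.range ((S k).orderEmbOfFin (hcard k)) := by
        rw [Finset.range_orderEmbOfFin]; exact hk
      obtain ⟨i, hi⟩ := this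
      have h1 := grp_apply (S k) x (hcard k) i
      have h2 := grp_apply (S k) x' (hcard k) i
      rw [hi] at h1 h2
      rw [← h1, ← h2]
      exact congrFun (congrFun hxx' k) i
    · have hsum : ∑ k, n k = Fintype.card ι := by
        rw [← Finset.card_univ, ← huniv,
          Finset.card_biUnion (fun k _ k' _ hkk' => hdisj k k' hkk')]
        exact (Finset.sum_congr rfl fun k _ => hcard k).symm
      simp only [Fintype.card_fun, Fintype.card_pi, Fintype.card_bool, Fintype.card_fin]
      rw [← hsum, ← Finset.prod_pow_eq_pow_sum]
  calc ∑ x : ι → Bool, (if ∀ k, grp (S k) x (n k) = v k then ∏ j, w (x j) else 0)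
      = ∑ x : ι → Bool, (if Ψ x = v then ∏ k, ∏ i, w (Ψ x k i) else 0) := by
        refine Finset.sum_congr rfl fun x _ => ?_
        rw [hprod x]
        congr 1
        simp only [hΨ, eq_iff_iff]
        exact funext_iff.symm
    _ = ∑ u : ∀ k, Fin (n k) → Bool, (if u = v then ∏ k, ∏ i, w (u k i) else 0) :=
        Fintype.sum_bijective Ψ hbij _ _ (fun x => rfl)
    _ = ∏ k, ∏ i, w (v k i) := by
        rw [Finset.sum_ite_eq' Finset.univ v]
        simp

/-- Fiber of `Sigma.fst` is equivalent to the corresponding factor. -/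
def sigmaFstFiber {d : Type*} {β : d → Type*} (s : d) :
    {x : Σ t, β t // x.1 = s} ≃ β s where
  toFun x := x.2 ▸ x.1.2
  invFun y := ⟨⟨s, y⟩, rfl⟩
  left_inv := by rintro ⟨⟨t, v⟩, rfl⟩; rfl
  right_inv y := rfl

lemma exists_labeling (p d : ℕ) (c : Fin d → ℕ) (hc : ∑ t, c t = p) :
    ∃ b : Fin p → Fin d, ∀ s,
      (Finset.univ.filter (fun j => b j = s)).card = c s := by
  have hcard : Fintype.card (Fin p) = Fintype.card (Σ t, Fin (c t)) := by
    simp [Fintype.card_sigma, hc]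
  obtain e := Fintype.equivOfCardEq hcard
  refine ⟨fun j => (e j).1, fun s => ?_⟩
  rw [← Fintype.card_subtype]
  calc Fintype.card {j // (e j).1 = s}
      = Fintype.card {x : Σ t, Fin (c t) // x.1 = s} :=
        Fintype.card_congr (e.subtypeEquiv fun j => by rfl)
    _ = Fintype.card (Fin (c s)) := Fintype.card_congr (sigmaFstFiber s)
    _ = c s := Fintype.card_fin _

section Concrete
variable {p d : ℕ} (c ℓ : Fin d → ℕ) (b : Fin p → Fin d)

/-- Number of consistent reveal patterns. -/
lemma count_consistent
    (hb : ∀ s, (Finset.univ.filter (fun j => b j = s)).card = c s) :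
    ((Finset.univ : Finset (Fin p → Option (Fin d))).filter
        (fun r => (∀ j, r j = none ∨ r j = some (b j)) ∧
          (∀ t, (Finset.univ.filter (fun j => r j = none ∧ b j = t)).card = ℓ t))).card
      = ∏ t, (c t).choose (ℓ t) := by
  have hfinal : (Fintype.piFinset (fun t =>
      (Finset.univ.filter (fun j => b j = t)).powersetCard (ℓ t))).card
      = ∏ t, (c t).choose (ℓ t) := by
    rw [Fintype.card_piFinset]
    exact Finset.prod_congr rfl fun t _ => by
      rw [Finset.card_powersetCard, hb t]
  rw [← hfinal]
  apply Finset.card_bij'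
      (i := fun r _ => fun t => Finset.univ.filter (fun j => r j = none ∧ b j = t))
      (j := fun S _ => fun j => if j ∈ S (b j) then none else some (b j))
  · intro r hr
    rw [Finset.mem_filter] at hr
    rw [Fintype.mem_piFinset]
    intro t
    rw [Finset.mem_powersetCard]
    refine ⟨fun j hj => ?_, hr.2.2 t⟩
    rw [Finset.mem_filter] at hj ⊢
    exact ⟨hj.1, hj.2.2⟩
  · intro S hS
    rw [Fintype.mem_piFinset] at hS
    rw [Finset.mem_filter]
    have hsub : ∀ t j, j ∈ S t → b j = t := by
      intro t j hj
      have := (Finset.mem_powersetCard.1 (hS t)).1 hj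
      exact (Finset.mem_filter.1 this).2
    have hmem : ∀ j t, (j ∈ S (b j) ∧ b j = t) ↔ j ∈ S t := by
      intro j t
      constructor
      · rintro ⟨hj, rfl⟩; exact hj
      · intro hj; have := hsub t j hj; subst this; exact ⟨hj, rfl⟩
    refine ⟨Finset.mem_univ _, fun j => ?_, fun t => ?_⟩
    · by_cases h : j ∈ S (b j) <;> simp [h]
    · have : (Finset.univ.filter (fun j =>
          (if j ∈ S (b j) then (none : Option (Fin d)) else some (b j)) = none ∧ b j = t))
          = S t := by
        ext j
        simp only [Finset.mem_filter, Finset.mem_univ, true_and, ite_eq_left_iff]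
        constructor
        · rintro ⟨h1, h2⟩
          by_cases h : j ∈ S (b j)
          · exact (hmem j t).1 ⟨h, h2⟩
          · exact absurd (h1 h) (by simp)
        · intro hj
          have hb' := hsub t j hj
          refine ⟨fun h => absurd (hb' ▸ hj) h, hb'⟩
      rw [this]
      exact (Finset.mem_powersetCard.1 (hS t)).2
  · intro r hr
    rw [Finset.mem_filter] at hr
    funext j
    by_cases h : j ∈ Finset.univ.filter (fun j' => r j' = none ∧ b j' = b j)
    · simp only [h, if_true]
      exact ((Finset.mem_filter.1 h).2.1).symm
    · simp only [h, if_false]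
      rcases hr.2.1 j with h1 | h1
      · exact absurd (Finset.mem_filter.2 ⟨Finset.mem_univ j, h1, rfl⟩) h
      · exact h1.symm
  · intro S hS
    rw [Fintype.mem_piFinset] at hS
    have hsub : ∀ t j, j ∈ S t → b j = t := by
      intro t j hj
      have := (Finset.mem_powersetCard.1 (hS t)).1 hj
      exact (Finset.mem_filter.1 this).2
    funext t
    ext j
    simp only [Finset.mem_filter, Finset.mem_univ, true_and]
    constructor
    · rintro ⟨h1, rfl⟩
      by_cases h : j ∈ S (b j)
      · exact h
      · simp [h] at h1
    · intro hj
      have hb' := hsub t j hj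
      subst hb'
      simp [hj]

variable (r : Fin p → Option (Fin d))

lemma label_filter_split (t : Fin d)
    (hcons1 : ∀ j, r j = none ∨ r j = some (b j)) :
    (Finset.univ.filter (fun j => b j = t))
      = (Finset.univ.filter (fun j => r j = none ∧ b j = t))
        ∪ (Finset.univ.filter (fun j => r j = some t)) := by
  ext j
  simp only [Finset.mem_filter, Finset.mem_univ, true_and, Finset.mem_union]
  constructor
  · intro hbt
    rcases hcons1 j with h | h
    · exact Or.inl ⟨h, hbt⟩
    · exact Or.inr (hbt ▸ h)
  · rintro (⟨_, hbt⟩ | h)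
    · exact hbt
    · rcases hcons1 j with h' | h'
      · rw [h'] at h; exact absurd h (by simp)
      · rw [h'] at h; exact Option.some_injective _ h

lemma hidden_revealed_disjoint (t t' : Fin d) :
    Disjoint (Finset.univ.filter (fun j => r j = none ∧ b j = t))
      (Finset.univ.filter (fun j => r j = some t')) := by
  rw [Finset.disjoint_left]
  intro j hj hj'
  rw [Finset.mem_filter] at hj hj'
  rw [hj.2.1] at hj'
  exact absurd hj'.2 (by simp)

lemma card_revealed (t : Fin d)
    (hb : ∀ s, (Finset.univ.filter (fun j => b j = s)).card = c s)
    (hcons1 : ∀ j, r j = none ∨ r j = some (b j))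
    (hcons2 : ∀ t, (Finset.univ.filter (fun j => r j = none ∧ b j = t)).card = ℓ t) :
    (Finset.univ.filter (fun j => r j = some t)).card = c t - ℓ t := by
  have hsplit := label_filter_split b r t hcons1
  have hdisj := hidden_revealed_disjoint b r t t
  have := Finset.card_union_of_disjoint hdisj
  rw [← hsplit, hb t, hcons2 t] at this
  omega

lemma N_split (t : Fin d) (x : Fin p → Bool)
    (hcons1 : ∀ j, r j = none ∨ r j = some (b j)) :
    (Finset.univ.filter (fun j => b j = t ∧ x j = true)).card
      = ((Finset.univ.filter (fun j => r j = none ∧ b j = t)).filter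
          (fun j => x j = true)).card
        + ((Finset.univ.filter (fun j => r j = some t)).filter
            (fun j => x j = true)).card := by
  rw [← Finset.card_union_of_disjoint (Finset.disjoint_filter_filter
    (hidden_revealed_disjoint b r t t)), ← Finset.filter_union,
    ← label_filter_split b r t hcons1, Finset.filter_filter]

end Concrete

set_option maxHeartbeats 2000000 in
theorem main_aux
    (p d : ℕ) (c : Fin d → ℕ) (hc : ∑ t, c t = p)
    {𝒴 : Type*} [Fintype 𝒴]
    (W : (Fin d → ℕ) → 𝒴 → ℝ) (hW0 : ∀ N y, 0 ≤ W N y) (hW1 : ∀ N, ∑ y, W N y = 1)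
    (ℓ : Fin d → ℕ) (hℓ : ∀ t, ℓ t ≤ c t)
    (q : ℝ) (hq : q ∈ Set.Ioo (0 : ℝ) 1) :
    cmi (fun b (rx : (Fin p → Option (Fin d)) × (Fin p → Bool)) (y : 𝒴) =>
        (if b ∈ (Finset.univ : Finset (Fin p → Fin d)).filter
            (fun b => ∀ s, (Finset.univ.filter (fun j => b j = s)).card = c s)
          then (1 : ℝ) / ((Finset.univ : Finset (Fin p → Fin d)).filter
            (fun b => ∀ s, (Finset.univ.filter (fun j => b j = s)).card = c s)).card
          else 0) *
        (if (∀ j, rx.1 j = none ∨ rx.1 j = some (b j)) ∧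
            (∀ t, (Finset.univ.filter (fun j => rx.1 j = none ∧ b j = t)).card = ℓ t)
          then (1 : ℝ) / ∏ t, (c t).choose (ℓ t) else 0) *
        (∏ j, (if rx.2 j then q else 1 - q)) *
        W (fun t => (Finset.univ.filter (fun j => b j = t ∧ rx.2 j = true)).card) y)
      ≤ cmi (fun (x0 : (t : Fin d) → Fin (ℓ t) → Bool)
              (x1 : (t : Fin d) → Fin (c t - ℓ t) → Bool) (y : 𝒴) =>
          (∏ t, ∏ j, (if x0 t j then q else 1 - q)) *
            (∏ t, ∏ j, (if x1 t j then q else 1 - q)) *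
            W (fun t => (Finset.univ.filter (fun j => x0 t j = true)).card +
                (Finset.univ.filter (fun j => x1 t j = true)).card) y) := by
  classical
  set bern1 : Bool → ℝ := fun v => if v then q else 1 - q with hbern1
  set B := (Finset.univ : Finset (Fin p → Fin d)).filter
      (fun b => ∀ s, (Finset.univ.filter (fun j => b j = s)).card = c s) with hB
  have hbern0 : ∀ v, 0 ≤ bern1 v := by
    rintro (_|_) <;> simp [hbern1] <;> [linarith [hq.2]; linarith [hq.1]]
  -- the data for cmi_le_of_push
  set μ : (Fin p → Fin d) → ((Fin p → Option (Fin d)) × (Fin p → Bool)) → ℝ :=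
    fun b rx =>
      (if b ∈ B then (1 : ℝ) / B.card else 0) *
      (if (∀ j, rx.1 j = none ∨ rx.1 j = some (b j)) ∧
          (∀ t, (Finset.univ.filter (fun j => rx.1 j = none ∧ b j = t)).card = ℓ t)
        then (1 : ℝ) / ∏ t, (c t).choose (ℓ t) else 0) *
      (∏ j, bern1 (rx.2 j)) with hμdef
  set g : (Fin p → Fin d) → ((Fin p → Option (Fin d)) × (Fin p → Bool)) → (Fin d → ℕ) :=
    fun b rx t => (Finset.univ.filter (fun j => b j = t ∧ rx.2 j = true)).card with hgdef
  set μ' : ((t : Fin d) → Fin (ℓ t) → Bool) → ((t : Fin d) → Fin (c t - ℓ t) → Bool) → ℝ :=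
    fun x0 x1 => (∏ t, ∏ j, bern1 (x0 t j)) * (∏ t, ∏ j, bern1 (x1 t j)) with hμ'def
  set g' : ((t : Fin d) → Fin (ℓ t) → Bool) → ((t : Fin d) → Fin (c t - ℓ t) → Bool) →
      (Fin d → ℕ) :=
    fun x0 x1 t => (Finset.univ.filter (fun j => x0 t j = true)).card +
      (Finset.univ.filter (fun j => x1 t j = true)).card with hg'def
  set ψ : (Fin p → Fin d) → ((Fin p → Option (Fin d)) × (Fin p → Bool)) →
      ((t : Fin d) → Fin (ℓ t) → Bool) :=
    fun b rx t => grp (Finset.univ.filter (fun j => rx.1 j = none ∧ b j = t)) rx.2 (ℓ t)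
    with hψdef
  set f : ((Fin p → Option (Fin d)) × (Fin p → Bool)) →
      ((t : Fin d) → Fin (c t - ℓ t) → Bool) :=
    fun rx t => grp (Finset.univ.filter (fun j => rx.1 j = some t)) rx.2 (c t - ℓ t)
    with hfdef
  have hμ0 : ∀ b rx, 0 ≤ μ b rx := by
    intro b rx
    refine mul_nonneg (mul_nonneg ?_ ?_) (Finset.prod_nonneg fun j _ => hbern0 _) <;>
      · split
        · positivity
        · exact le_rfl
  have hg : ∀ b rx, μ b rx ≠ 0 → g' (ψ b rx) (f rx) = g b rx := by
    intro b rx hμ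
    have hPb : b ∈ B := by
      by_contra hbB
      apply hμ
      simp only [hμdef, hbB, if_false, zero_mul]
    have hcons : (∀ j, rx.1 j = none ∨ rx.1 j = some (b j)) ∧
        (∀ t, (Finset.univ.filter (fun j => rx.1 j = none ∧ b j = t)).card = ℓ t) := by
      by_contra hcons
      apply hμ
      simp only [hμdef, hcons, if_false, mul_zero, zero_mul]
    have hb : ∀ s, (Finset.univ.filter (fun j => b j = s)).card = c s := by
      rw [hB, Finset.mem_filter] at hPb
      exact hPb.2
    funext t
    show (Finset.univ.filter (fun i => ψ b rx t i = true)).card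
        + (Finset.univ.filter (fun i => f rx t i = true)).card = _
    rw [hψdef, hfdef]
    simp only
    rw [grp_card _ _ (hcons.2 t),
      grp_card _ _ (card_revealed c ℓ b rx.1 t hb hcons.1 hcons.2)]
    exact (N_split b rx.1 t rx.2 hcons.1).symm
  have hBcard : B.card ≠ 0 := by
    obtain ⟨b0, hb0⟩ := exists_labeling p d c hc
    exact Finset.card_ne_zero_of_mem (by rw [hB, Finset.mem_filter]; exact ⟨Finset.mem_univ _, hb0⟩)
  have hchoose : (∏ t, (c t).choose (ℓ t)) ≠ 0 :=
    Finset.prod_ne_zero_iff.2 fun t _ => (Nat.choose_pos (hℓ t)).ne'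
  have hpush : ∀ x0 x1, μ' x0 x1
      = ∑ b, ∑ rx, if ψ b rx = x0 ∧ f rx = x1 then μ b rx else 0 := by
    intro x0 x1
    have h1 : ∀ (b : Fin p → Fin d) (r : Fin p → Option (Fin d)),
        (∑ x : Fin p → Bool, if ψ b (r, x) = x0 ∧ f (r, x) = x1 then μ b (r, x) else 0)
          = ((if b ∈ B then (1 : ℝ) / B.card else 0) *
              (if (∀ j, r j = none ∨ r j = some (b j)) ∧
                  (∀ t, (Finset.univ.filter (fun j => r j = none ∧ b j = t)).card = ℓ t)
                then (1 : ℝ) / ∏ t, (c t).choose (ℓ t) else 0)) * μ' x0 x1 := by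
      intro b r
      have hterm : ∀ x : Fin p → Bool,
          (if ψ b (r, x) = x0 ∧ f (r, x) = x1 then μ b (r, x) else 0)
            = ((if b ∈ B then (1 : ℝ) / B.card else 0) *
                (if (∀ j, r j = none ∨ r j = some (b j)) ∧
                    (∀ t, (Finset.univ.filter (fun j => r j = none ∧ b j = t)).card = ℓ t)
                  then (1 : ℝ) / ∏ t, (c t).choose (ℓ t) else 0)) *
              (if ψ b (r, x) = x0 ∧ f (r, x) = x1 then ∏ j, bern1 (x j) else 0) := by
        intro x
        simp only [hμdef]
        split <;> ring
      rw [Finset.sum_congr rfl fun x _ => hterm x, ← Finset.mul_sum]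
      set A := ((if b ∈ B then (1 : ℝ) / B.card else 0) *
          (if (∀ j, r j = none ∨ r j = some (b j)) ∧
              (∀ t, (Finset.univ.filter (fun j => r j = none ∧ b j = t)).card = ℓ t)
            then (1 : ℝ) / ∏ t, (c t).choose (ℓ t) else 0)) with hAdef
      rcases eq_or_ne A 0 with hA0 | hA0
      · rw [hA0, zero_mul, zero_mul]
      · have hbB : b ∈ B := by
          by_contra hbB
          exact hA0 (by rw [hAdef, if_neg hbB, zero_mul])
        have hcons : (∀ j, r j = none ∨ r j = some (b j)) ∧
            (∀ t, (Finset.univ.filter (fun j => r j = none ∧ b j = t)).card = ℓ t) := by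
          by_contra hcons
          exact hA0 (by rw [hAdef, if_neg hcons, mul_zero])
        have hb : ∀ s, (Finset.univ.filter (fun j => b j = s)).card = c s := by
          rw [hB, Finset.mem_filter] at hbB
          exact hbB.2
        congr 1
        -- the partition family indexed by `Fin d ⊕ Fin d`
        set S : Fin d ⊕ Fin d → Finset (Fin p) :=
          Sum.elim (fun t => Finset.univ.filter (fun j => r j = none ∧ b j = t))
            (fun t => Finset.univ.filter (fun j => r j = some t)) with hSdef
        set n : Fin d ⊕ Fin d → ℕ := Sum.elim ℓ (fun t => c t - ℓ t) with hndef
        have hdisj : ∀ k k', k ≠ k' → Disjoint (S k) (S k') := by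
          rintro (t | t) (t' | t') hkk' <;> rw [hSdef] <;> simp only [Sum.elim_inl, Sum.elim_inr]
          · rw [Finset.disjoint_left]
            intro j hj hj'
            rw [Finset.mem_filter] at hj hj'
            exact hkk' (by rw [← hj.2.2, ← hj'.2.2])
          · exact hidden_revealed_disjoint b r t t'
          · exact (hidden_revealed_disjoint b r t' t).symm
          · rw [Finset.disjoint_left]
            intro j hj hj'
            rw [Finset.mem_filter] at hj hj'
            apply hkk'
            have := hj.2.symm.trans hj'.2
            rw [Option.some_inj] at this
            rw [this]
        have hcover : ∀ j, ∃ k, j ∈ S k := by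
          intro j
          rcases hcons.1 j with h | h
          · exact ⟨Sum.inl (b j), by rw [hSdef]; simp [h]⟩
          · exact ⟨Sum.inr (b j), by rw [hSdef]; simp [h]⟩
        have hcard : ∀ k, (S k).card = n k := by
          rintro (t | t) <;> rw [hSdef, hndef] <;> simp only [Sum.elim_inl, Sum.elim_inr]
          · exact hcons.2 t
          · exact card_revealed c ℓ b r t hb hcons.1 hcons.2
        set v : ∀ k, Fin (n k) → Bool :=
          fun k => Sum.rec (motive := fun k => Fin (n k) → Bool)
            (fun t => x0 t) (fun t => x1 t) k with hvdef
        have hcond : ∀ x : Fin p → Bool,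
            (ψ b (r, x) = x0 ∧ f (r, x) = x1) ↔ (∀ k, grp (S k) x (n k) = v k) := by
          intro x
          constructor
          · rintro ⟨h0, h1'⟩ (t | t)
            · exact congrFun h0 t
            · exact congrFun h1' t
          · intro h
            exact ⟨funext fun t => h (Sum.inl t), funext fun t => h (Sum.inr t)⟩
        calc ∑ x : Fin p → Bool, (if ψ b (r, x) = x0 ∧ f (r, x) = x1
                then ∏ j, bern1 (x j) else 0)
            = ∑ x : Fin p → Bool, (if ∀ k, grp (S k) x (n k) = v k
                then ∏ j, bern1 (x j) else 0) :=
              Finset.sum_congr rfl fun x _ => if_congr (hcond x) rfl rfl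
          _ = ∏ k, ∏ i, bern1 (v k i) := by
              have h := sum_partition_prod S hdisj hcover n hcard bern1 v
              convert h using 2
          _ = μ' x0 x1 := by
              rw [Fintype.prod_sum_type, hμ'def]
              rfl
    calc μ' x0 x1
        = (∑ b, ∑ r : Fin p → Option (Fin d),
            ((if b ∈ B then (1 : ℝ) / B.card else 0) *
              (if (∀ j, r j = none ∨ r j = some (b j)) ∧
                  (∀ t, (Finset.univ.filter (fun j => r j = none ∧ b j = t)).card = ℓ t)
                then (1 : ℝ) / ∏ t, (c t).choose (ℓ t) else 0))) * μ' x0 x1 := by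
          have hsum1 : (∑ b, ∑ r : Fin p → Option (Fin d),
              ((if b ∈ B then (1 : ℝ) / B.card else 0) *
                (if (∀ j, r j = none ∨ r j = some (b j)) ∧
                    (∀ t, (Finset.univ.filter (fun j => r j = none ∧ b j = t)).card = ℓ t)
                  then (1 : ℝ) / ∏ t, (c t).choose (ℓ t) else 0))) = 1 := by
            have hrow : ∀ b : Fin p → Fin d,
                (∑ r : Fin p → Option (Fin d),
                  ((if b ∈ B then (1 : ℝ) / B.card else 0) *
                    (if (∀ j, r j = none ∨ r j = some (b j)) ∧
                        (∀ t, (Finset.univ.filter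
                          (fun j => r j = none ∧ b j = t)).card = ℓ t)
                      then (1 : ℝ) / ∏ t, (c t).choose (ℓ t) else 0)))
                  = (if b ∈ B then (1 : ℝ) / B.card else 0) := by
              intro b
              rw [← Finset.mul_sum]
              by_cases hbB : b ∈ B
              · have hb : ∀ s, (Finset.univ.filter (fun j => b j = s)).card = c s := by
                  rw [hB, Finset.mem_filter] at hbB
                  exact hbB.2
                have : (∑ r : Fin p → Option (Fin d),
                    (if (∀ j, r j = none ∨ r j = some (b j)) ∧
                        (∀ t, (Finset.univ.filter
                          (fun j => r j = none ∧ b j = t)).card = ℓ t)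
                      then (1 : ℝ) / ∏ t, (c t).choose (ℓ t) else 0)) = 1 := by
                  rw [Finset.sum_ite, Finset.sum_const, Finset.sum_const_zero, add_zero,
                    count_consistent c ℓ b hb, nsmul_eq_mul]
                  rw [mul_one_div, div_self (by exact_mod_cast hchoose)]
                rw [this, mul_one]
              · rw [if_neg hbB, zero_mul]
            rw [Finset.sum_congr rfl fun b _ => hrow b]
            rw [Finset.sum_ite_mem, Finset.univ_inter, Finset.sum_const, nsmul_eq_mul]
            rw [mul_one_div, div_self (by exact_mod_cast hBcard)]
          rw [hsum1, one_mul]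
      _ = ∑ b, ∑ rx, if ψ b rx = x0 ∧ f rx = x1 then μ b rx else 0 := by
          rw [Finset.sum_mul]
          refine Finset.sum_congr rfl fun b _ => ?_
          rw [Fintype.sum_prod_type, Finset.sum_mul]
          exact Finset.sum_congr rfl fun r _ => (h1 b r).symm
  refine cmi_le_of_push μ μ' g g' W hW0 hW1 hμ0 ψ f ?_ hg
  intro x0 x1
  rw [hpush x0 x1]
  refine Finset.sum_congr rfl fun b _ => Finset.sum_congr rfl fun rx _ => ?_
  by_cases h : ψ b rx = x0 ∧ f rx = x1 <;> simp [h]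

/-- Corollary 1 (Bernoulli testing): if the entries of a single test `X` are i.i.d.
`Bernoulli(q)` and `Y` depends on `(β, X)` only through the counts `N_1,…,N_d`, then
`I(β; Y | β_{S_ℓ^c}, X) ≤ I(X_{0,ℓ}; Y | X_{1,ℓ})`, where `X_{0,ℓ}` collects the entries
of `X` at the hidden items (`ℓ t` per label `t`) and `X_{1,ℓ}` those at the revealed items
(`c t - ℓ t` per label `t`), grouped by label. -/
theorem bernoulli_genie_mi_bound
    (p d : ℕ) (c : Fin d → ℕ) (hc : ∑ t, c t = p)
    {𝒴 : Type*} [Fintype 𝒴]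
    (W : (Fin d → ℕ) → 𝒴 → ℝ) (hW0 : ∀ N y, 0 ≤ W N y) (hW1 : ∀ N, ∑ y, W N y = 1)
    (ℓ : Fin d → ℕ) (hℓ : ∀ t, ℓ t ≤ c t)
    (q : ℝ) (hq : q ∈ Set.Ioo (0 : ℝ) 1) :
    let bern1 : Bool → ℝ := fun v => if v then q else 1 - q
    let B := (Finset.univ : Finset (Fin p → Fin d)).filter
      (fun b => ∀ s, (Finset.univ.filter (fun j => b j = s)).card = c s)
    let N : (Fin p → Fin d) → (Fin p → Bool) → Fin d → ℕ := fun b x t =>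
      (Finset.univ.filter (fun j => b j = t ∧ x j = true)).card
    let Pb : (Fin p → Fin d) → ℝ := fun b => if b ∈ B then (1 : ℝ) / B.card else 0
    let rev : (Fin p → Fin d) → (Fin p → Option (Fin d)) → ℝ := fun b r =>
      if (∀ j, r j = none ∨ r j = some (b j)) ∧
          (∀ t, (Finset.univ.filter (fun j => r j = none ∧ b j = t)).card = ℓ t)
      then (1 : ℝ) / ∏ t, (c t).choose (ℓ t) else 0
    cmi (fun b (rx : (Fin p → Option (Fin d)) × (Fin p → Bool)) (y : 𝒴) =>
        Pb b * rev b rx.1 * (∏ j, bern1 (rx.2 j)) * W (N b rx.2) y)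
      ≤ cmi (fun (x0 : (t : Fin d) → Fin (ℓ t) → Bool)
              (x1 : (t : Fin d) → Fin (c t - ℓ t) → Bool) (y : 𝒴) =>
          (∏ t, ∏ j, bern1 (x0 t j)) * (∏ t, ∏ j, bern1 (x1 t j)) *
            W (fun t => (Finset.univ.filter (fun j => x0 t j = true)).card +
                (Finset.univ.filter (fun j => x1 t j = true)).card) y) := by
  exact main_aux p d c hc W hW0 hW1 ℓ hℓ q hq
end
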